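/- arXiv:1808.06451 — 8 statements merged into one kernel-verified Lean document; each statement's English description precedes it below -/
import Mathlib

section
/- Let ψ be the inverse of y ↦ y - 1 + log y. For every n ≥ 1, the identity (1 + ψ)ψ^(n) = ψ^(n-1) - (1/2) ∑_{j=1}^{n-1} C(n,j) ψ^(j) ψ^(n-j) holds, where ψ^(j) denotes the j-th derivative of ψ and ψ^(0) = ψ. -/
open Real Finset
open scoped ContDiff

/-- The recursion for the derivatives of the deformed exponential `ψ`
(the inverse of `y ↦ y - 1 + log y`): for every `n ≥ 1`,
`(1+ψ)ψ⁽ⁿ⁾ = ψ⁽ⁿ⁻¹⁾ - (1/2)∑_{j=1}^{n-1} C(n,j) ψ⁽ʲ⁾ψ⁽ⁿ⁻ʲ⁾`. -/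
theorem psi_derivative_recursion (ψ : ℝ → ℝ)
    (hpos : ∀ z, 0 < ψ z)
    (hinv : ∀ z, ψ z - 1 + Real.log (ψ z) = z) :
    ∀ n : ℕ, 1 ≤ n → ∀ z : ℝ,
      (1 + ψ z) * iteratedDeriv n ψ z
        = iteratedDeriv (n - 1) ψ z
          - (1 / 2) * ∑ j ∈ Finset.Ico 1 n,
              (n.choose j : ℝ) * iteratedDeriv j ψ z * iteratedDeriv (n - j) ψ z := by
  -- strict monotonicity of ψ
  have hmono : StrictMono ψ := by
    intro a b hab
    by_contra h
    push_neg at h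
    have hlog : Real.log (ψ b) ≤ Real.log (ψ a) := by
      rcases eq_or_lt_of_le h with h' | h'
      · rw [h']
      · exact (Real.log_lt_log (hpos b) h').le
    have ha := hinv a; have hb := hinv b
    linarith
  -- surjectivity onto (0,∞)
  have hsurj : ∀ y : ℝ, 0 < y → ψ (y - 1 + Real.log y) = y := by
    intro y hy
    have h1 := hinv (y - 1 + Real.log y)
    by_contra hne
    rcases lt_or_gt_of_ne hne with h | h
    · have := Real.log_lt_log (hpos (y - 1 + Real.log y)) h; linarith
    · have := Real.log_lt_log hy h; linarith
  -- continuity of ψ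
  have hcontAt : ∀ a : ℝ, ContinuousAt ψ a := by
    intro a
    apply continuousAt_of_monotoneOn_of_image_mem_nhds
      (s := Set.univ) (fun x _ y _ hxy => hmono.monotone hxy) Filter.univ_mem
    rw [Set.image_univ]
    apply Filter.mem_of_superset (isOpen_Ioi.mem_nhds (hpos a))
    intro y hy
    exact ⟨y - 1 + Real.log y, hsurj y hy⟩
  -- derivative of ψ
  have hderiv : ∀ a : ℝ, HasDerivAt ψ (ψ a / (1 + ψ a)) a := by
    intro a
    have hp := hpos a
    have hne : ψ a ≠ 0 := hp.ne'
    have hf : HasDerivAt (fun y => y - 1 + Real.log y) (1 + (ψ a)⁻¹) (ψ a) := by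
      simpa using ((hasDerivAt_id (ψ a)).sub_const 1).fun_add (Real.hasDerivAt_log hne)
    have hf' : (1 : ℝ) + (ψ a)⁻¹ ≠ 0 := by positivity
    have h := hf.of_local_left_inverse (hcontAt a) hf' (Filter.Eventually.of_forall hinv)
    have h1 : (1 : ℝ) + ψ a ≠ 0 := by positivity
    rw [show (1 : ℝ) + (ψ a)⁻¹ = (1 + ψ a) / ψ a by rw [add_div, div_self hne, one_div, add_comm], inv_div] at h
    exact h
  have hdψ : deriv ψ = fun z => ψ z / (1 + ψ z) := funext fun z => (hderiv z).deriv
  have hdiffψ : Differentiable ℝ ψ := fun z => (hderiv z).differentiableAt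
  -- smoothness of ψ
  have hsmooth : ∀ n : ℕ, ContDiff ℝ n ψ := by
    intro n
    induction n with
    | zero => exact contDiff_zero.mpr (continuous_iff_continuousAt.mpr hcontAt)
    | succ n ih =>
      rw [show ((n + 1 : ℕ) : WithTop ℕ∞) = (n : ℕ) + 1 by push_cast; rfl,
        contDiff_succ_iff_deriv]
      refine ⟨hdiffψ, by intro h; exact absurd h (by simp), ?_⟩
      rw [hdψ]
      exact ih.div (contDiff_const.add ih) (fun z => by have := hpos z; positivity)
  have htop : ContDiff ℝ ∞ ψ := contDiff_infty.mpr hsmooth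
  set D : ℕ → ℝ → ℝ := fun k => iteratedDeriv k ψ with hD
  have hD0 : D 0 = ψ := iteratedDeriv_zero
  have hDdiff : ∀ k, Differentiable ℝ (D k) := by
    intro k
    have hk : ContDiff ℝ ∞ (D k) := by
      rw [hD]
      simp only [iteratedDeriv_eq_iterate]
      exact htop.iterate_deriv k
    exact hk.differentiable (by simp)
  have hDd : ∀ k z, HasDerivAt (D k) (D (k + 1) z) z := by
    intro k z
    have h := ((hDdiff k) z).hasDerivAt
    rwa [show deriv (D k) z = D (k + 1) z from by simp only [hD, iteratedDeriv_succ]] at h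
  have hψd : ∀ z, HasDerivAt ψ (D 1 z) z := fun z => hD0 ▸ hDd 0 z
  -- the key recursion, in `range` form
  have key : ∀ m : ℕ, ∀ z : ℝ,
      (1 + ψ z) * D (m + 1) z
        + ∑ i ∈ range m, (m.choose (i + 1) : ℝ) * D (i + 1) z * D (m - i) z = D m z := by
    intro m
    induction m with
    | zero =>
      intro z
      have h1 : D 1 z = ψ z / (1 + ψ z) := by
        simp only [hD, iteratedDeriv_one, hdψ]
      have hne : (1 : ℝ) + ψ z ≠ 0 := by have := hpos z; positivity
      simp only [range_zero, sum_empty, add_zero, h1, hD0]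
      field_simp
    | succ m ih =>
      intro z
      have hfun : (fun z => (1 + ψ z) * D (m + 1) z
          + ∑ i ∈ range m, (m.choose (i + 1) : ℝ) * D (i + 1) z * D (m - i) z) = D m :=
        funext ih
      have hL : HasDerivAt (fun z => (1 + ψ z) * D (m + 1) z
          + ∑ i ∈ range m, (m.choose (i + 1) : ℝ) * D (i + 1) z * D (m - i) z)
          ((D 1 z * D (m + 1) z + (1 + ψ z) * D (m + 2) z)
            + ∑ i ∈ range m, ((m.choose (i + 1) : ℝ) * D (i + 2) z * D (m - i) z
              + (m.choose (i + 1) : ℝ) * D (i + 1) z * D (m - i + 1) z)) z := by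
        have h1 : HasDerivAt (fun z => 1 + ψ z) (D 1 z) z := by
          simpa using (hasDerivAt_const z (1 : ℝ)).fun_add (hψd z)
        have h2 := h1.mul (hDd (m + 1) z)
        have h3 : HasDerivAt
            (fun z => ∑ i ∈ range m, (m.choose (i + 1) : ℝ) * D (i + 1) z * D (m - i) z)
            (∑ i ∈ range m, ((m.choose (i + 1) : ℝ) * D (i + 2) z * D (m - i) z
              + (m.choose (i + 1) : ℝ) * D (i + 1) z * D (m - i + 1) z)) z := by
          apply HasDerivAt.fun_sum
          intro i _
          have h4 := ((hDd (i + 1) z).const_mul ((m.choose (i + 1) : ℝ))).mul (hDd (m - i) z)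
          exact h4
        exact h2.add h3
      rw [hfun] at hL
      have heq := hL.unique (hDd m z)
      have hdistrib : ∑ i ∈ range m, ((m.choose (i + 1) : ℝ) * D (i + 2) z * D (m - i) z
            + (m.choose (i + 1) : ℝ) * D (i + 1) z * D (m - i + 1) z)
          = ∑ i ∈ range m, (m.choose (i + 1) : ℝ) * D (i + 2) z * D (m - i) z
            + ∑ i ∈ range m, (m.choose (i + 1) : ℝ) * D (i + 1) z * D (m - i + 1) z :=
        Finset.sum_add_distrib
      rw [hdistrib] at heq
      have hsplit : ∑ i ∈ range (m + 1), ((m + 1).choose (i + 1) : ℝ) * D (i + 1) z * D (m + 1 - i) z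
          = ∑ i ∈ range (m + 1), (m.choose i : ℝ) * D (i + 1) z * D (m + 1 - i) z
            + ∑ i ∈ range (m + 1), (m.choose (i + 1) : ℝ) * D (i + 1) z * D (m + 1 - i) z := by
        rw [← Finset.sum_add_distrib]
        refine Finset.sum_congr rfl fun i _ => ?_
        rw [Nat.choose_succ_succ]
        push_cast
        ring
      have hA : ∑ i ∈ range (m + 1), (m.choose i : ℝ) * D (i + 1) z * D (m + 1 - i) z
          = (∑ i ∈ range m, (m.choose (i + 1) : ℝ) * D (i + 2) z * D (m - i) z)
            + D 1 z * D (m + 1) z := by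
        rw [Finset.sum_range_succ']
        congr 1
        · refine Finset.sum_congr rfl fun i _ => ?_
          have e1 : m + 1 - (i + 1) = m - i := by omega
          rw [e1]
        · simp
      have hB : ∑ i ∈ range (m + 1), (m.choose (i + 1) : ℝ) * D (i + 1) z * D (m + 1 - i) z
          = ∑ i ∈ range m, (m.choose (i + 1) : ℝ) * D (i + 1) z * D (m - i + 1) z := by
        rw [Finset.sum_range_succ, Nat.choose_succ_self]
        push_cast
        rw [zero_mul, zero_mul, add_zero]
        refine Finset.sum_congr rfl fun i hi => ?_
        have hi' := Finset.mem_range.mp hi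
        have e1 : m + 1 - i = m - i + 1 := by omega
        rw [e1]
      rw [hsplit, hA, hB]
      linarith [heq]
  -- deduce the statement
  intro n hn z
  obtain ⟨m, rfl⟩ : ∃ m, n = m + 1 := ⟨n - 1, by omega⟩
  have hkey := key m z
  have hT : ∑ j ∈ Finset.Ico 1 (m + 1), ((m + 1).choose j : ℝ) * D j z * D (m + 1 - j) z
      = 2 * ∑ i ∈ range m, (m.choose (i + 1) : ℝ) * D (i + 1) z * D (m - i) z := by
    rw [Finset.sum_Ico_eq_sum_range]
    simp only [Nat.add_sub_cancel]
    have hre : ∀ i ∈ range m, ((m + 1).choose (1 + i) : ℝ) * D (1 + i) z * D (m + 1 - (1 + i)) z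
        = (m.choose i : ℝ) * D (i + 1) z * D (m - i) z
          + (m.choose (i + 1) : ℝ) * D (i + 1) z * D (m - i) z := by
      intro i hi
      have e1 : 1 + i = i + 1 := by omega
      have e2 : m + 1 - (i + 1) = m - i := by omega
      rw [e1, e2, Nat.choose_succ_succ]
      push_cast
      ring
    rw [Finset.sum_congr rfl hre, Finset.sum_add_distrib]
    have hrefl : ∑ i ∈ range m, (m.choose i : ℝ) * D (i + 1) z * D (m - i) z
        = ∑ i ∈ range m, (m.choose (i + 1) : ℝ) * D (i + 1) z * D (m - i) z := by
      rw [← Finset.sum_range_reflect]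
      refine Finset.sum_congr rfl fun i hi => ?_
      have hi' := Finset.mem_range.mp hi
      have e1 : m - 1 - i + 1 = m - i := by omega
      have e2 : m - (m - 1 - i) = i + 1 := by omega
      have e3 : m - 1 - i = m - (i + 1) := by omega
      rw [e1, e2, e3, Nat.choose_symm (by omega)]
      ring
    rw [hrefl]
    ring
  simp only [Nat.add_sub_cancel] at *
  rw [hT] at *
  linarith [hkey]
end

section
/- Let ψ be the inverse of y ↦ y - 1 + log y. For every n ≥ 2 there exists a polynomial Q of degree at most n-2 such that ψ^(n) = Q(ψ)·ψ'/(1+ψ)^{2(n-1)}. Consequently, for each n ≥ 2, the functions ψ^(n), ψ^(n)/ψ and ψ^(n)/ψ' are bounded on ℝ. -/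
open Real Polynomial

/-- For the deformed exponential `ψ` (inverse of `y ↦ y - 1 + log y`) and every `n ≥ 2`
there is a polynomial `Q` of degree at most `n-2` with
`ψ⁽ⁿ⁾ = Q(ψ)·ψ'/(1+ψ)^{2(n-1)}`; consequently `ψ⁽ⁿ⁾`, `ψ⁽ⁿ⁾/ψ` and `ψ⁽ⁿ⁾/ψ'` are bounded. -/
theorem psi_higher_derivatives (ψ : ℝ → ℝ)
    (hpos : ∀ z, 0 < ψ z)
    (hinv : ∀ z, ψ z - 1 + Real.log (ψ z) = z) :
    ∀ n : ℕ, 2 ≤ n →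
      (∃ Q : Polynomial ℝ, Q.natDegree ≤ n - 2 ∧
        ∀ z : ℝ, iteratedDeriv n ψ z
          = Q.eval (ψ z) * deriv ψ z / (1 + ψ z) ^ (2 * (n - 1))) ∧
      (∃ C : ℝ, ∀ z : ℝ,
        |iteratedDeriv n ψ z| ≤ C ∧
        |iteratedDeriv n ψ z / ψ z| ≤ C ∧
        |iteratedDeriv n ψ z / deriv ψ z| ≤ C) := by
  have h1 : ∀ z, (0:ℝ) < 1 + ψ z := fun z => by have := hpos z; linarith
  -- ψ is strictly monotone
  have hmono : StrictMono ψ := by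
    intro a b hab
    by_contra h
    push_neg at h
    have hlog : Real.log (ψ b) ≤ Real.log (ψ a) := Real.log_le_log (hpos b) h
    have ha := hinv a
    have hb := hinv b
    linarith
  -- ψ is surjective onto (0, ∞)
  have hsurj : Function.Surjective (fun z => (⟨ψ z, hpos z⟩ : Set.Ioi (0:ℝ))) := by
    rintro ⟨y, hy⟩
    simp only [Set.mem_Ioi] at hy
    refine ⟨y - 1 + Real.log y, ?_⟩
    have h2 := hinv (y - 1 + Real.log y)
    have : ψ (y - 1 + Real.log y) = y := by
      by_contra hne
      rcases lt_or_gt_of_ne hne with h | h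
      · have := Real.log_lt_log (hpos _) h
        linarith
      · have := Real.log_lt_log hy h
        linarith
    exact Subtype.ext this
  -- ψ is continuous
  have hψcont : Continuous ψ := by
    have hm : StrictMono (fun z => (⟨ψ z, hpos z⟩ : Set.Ioi (0:ℝ))) := fun a b hab => hmono hab
    have := (StrictMono.orderIsoOfSurjective _ hm hsurj).continuous
    exact continuous_subtype_val.comp this
  -- derivative of ψ
  have hψ' : ∀ z, HasDerivAt ψ (ψ z / (1 + ψ z)) z := by
    intro z
    have ha : (0:ℝ) < ψ z := hpos z
    have hg : HasDerivAt (fun y => y - 1 + Real.log y) ((1 + ψ z) / ψ z) (ψ z) := by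
      have := ((hasDerivAt_id (ψ z)).sub_const 1).add (Real.hasDerivAt_log (ne_of_gt ha))
      refine this.congr_deriv ?_
      field_simp
      ring
    have hne : (1 + ψ z) / ψ z ≠ 0 := by positivity
    have := HasDerivAt.of_local_left_inverse hψcont.continuousAt hg hne
      (Filter.Eventually.of_forall hinv)
    exact this.congr_deriv (by rw [inv_div])
  have hderiv : ∀ z, deriv ψ z = ψ z / (1 + ψ z) := fun z => (hψ' z).deriv
  -- the basic differentiation step
  have hstep : ∀ (Q : Polynomial ℝ) (k : ℕ) (z : ℝ),
      HasDerivAt (fun z => Q.eval (ψ z) * ψ z / (1 + ψ z) ^ (k+1))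
        ((X * (1+X) * Q.derivative + (1 - C (k:ℝ) * X) * Q).eval (ψ z) * ψ z
          / (1 + ψ z) ^ (k+3)) z := by
    intro Q k z
    have hu : 0 < ψ z := hpos z
    have h1u : 0 < 1 + ψ z := h1 z
    have hne : (1 + ψ z) ≠ 0 := ne_of_gt h1u
    have hQψ : HasDerivAt (fun z => Q.eval (ψ z))
        (Q.derivative.eval (ψ z) * (ψ z / (1 + ψ z))) z := by
      exact (Q.hasDerivAt (ψ z)).comp z (hψ' z)
    have hden := ((hψ' z).const_add 1).pow (k+1)
    have hnum : HasDerivAt (fun z => Q.eval (ψ z) * ψ z)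
        (Q.derivative.eval (ψ z) * (ψ z / (1 + ψ z)) * ψ z
          + Q.eval (ψ z) * (ψ z / (1 + ψ z))) z := hQψ.mul (hψ' z)
    have hd := hnum.div hden (pow_ne_zero _ hne)
    refine hd.congr_deriv ?_
    symm
    simp only [Pi.pow_apply, Nat.add_sub_cancel, eval_add, eval_mul, eval_sub, eval_one, eval_X, eval_C]
    push_cast
    field_simp
    ring
  -- the key induction
  have key : ∀ k : ℕ, ∃ Q : Polynomial ℝ, Q.natDegree ≤ k ∧
      ∀ z, iteratedDeriv (k+2) ψ z = Q.eval (ψ z) * ψ z / (1 + ψ z) ^ (2*k+3) := by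
    intro k
    induction k with
    | zero =>
      refine ⟨1, by simp, fun z => ?_⟩
      have h1' : iteratedDeriv 1 ψ = fun z => (1:ℝ[X]).eval (ψ z) * ψ z / (1 + ψ z) ^ (0+1) := by
        funext w
        simp [iteratedDeriv_one, (hψ' w).deriv]
      rw [show (2:ℕ) = 1+1 from rfl, iteratedDeriv_succ, h1', (hstep 1 0 z).deriv]
      norm_num
    | succ k ih =>
      obtain ⟨Q, hdeg, hQ⟩ := ih
      refine ⟨X * (1+X) * Q.derivative + (1 - C (((2*k+2 : ℕ)):ℝ) * X) * Q, ?_, fun z => ?_⟩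
      · refine le_trans (natDegree_add_le _ _) (max_le ?_ ?_)
        · by_cases hQ0 : Q.derivative = 0
          · simp [hQ0]
          · have hd0 : Q.natDegree ≠ 0 := by
              intro h
              exact hQ0 (by rw [Polynomial.eq_C_of_natDegree_eq_zero h]; simp)
            have h2 : Q.derivative.natDegree < Q.natDegree := Polynomial.natDegree_derivative_lt hd0
            calc (X * (1+X) * Q.derivative).natDegree
                ≤ (X * (1+X)).natDegree + Q.derivative.natDegree := natDegree_mul_le
              _ ≤ 2 + Q.derivative.natDegree := by
                  have : (X * (1+X) : ℝ[X]).natDegree ≤ 2 := by compute_degree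
                  omega
              _ ≤ k + 1 := by omega
        · calc ((1 - C (((2*k+2 : ℕ)):ℝ) * X) * Q).natDegree
              ≤ (1 - C (((2*k+2 : ℕ)):ℝ) * X).natDegree + Q.natDegree := natDegree_mul_le
            _ ≤ 1 + k := by
                have : (1 - C (((2*k+2 : ℕ)):ℝ) * X : ℝ[X]).natDegree ≤ 1 := by compute_degree
                omega
            _ = k + 1 := by omega
      · have hfun : iteratedDeriv (k+2) ψ
            = fun z => Q.eval (ψ z) * ψ z / (1 + ψ z) ^ (2*k+2+1) := by
          funext w; rw [hQ w]
        rw [show k+1+2 = (k+2)+1 from rfl, iteratedDeriv_succ, hfun,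
          (hstep Q (2*k+2) z).deriv]
        rw [show 2*(k+1)+3 = 2*k+2+3 by ring]
  -- conclude
  intro n hn
  obtain ⟨m, rfl⟩ : ∃ m, n = m + 2 := ⟨n - 2, by omega⟩
  obtain ⟨Q, hdeg, hQ⟩ := key m
  constructor
  · refine ⟨Q, by simpa using hdeg, fun z => ?_⟩
    rw [hQ z, hderiv z, show 2*(m+2-1) = 2*m+2 by omega]
    have hne : (1 + ψ z) ≠ 0 := ne_of_gt (h1 z)
    rw [show 2*m+3 = (2*m+2)+1 from rfl, pow_succ]
    field_simp
  · set S : ℝ := ∑ i ∈ Finset.range (Q.natDegree + 1), |Q.coeff i| with hS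
    have hSnn : 0 ≤ S := Finset.sum_nonneg fun i _ => abs_nonneg _
    refine ⟨S, fun z => ?_⟩
    have hup : 0 < ψ z := hpos z
    have htp : 0 < 1 + ψ z := h1 z
    have ht1 : 1 ≤ 1 + ψ z := by linarith
    have hut : ψ z ≤ 1 + ψ z := by linarith
    have h0 : ψ z ≠ 0 := ne_of_gt hup
    have hQb : |Q.eval (ψ z)| ≤ S * (1+ψ z) ^ m := by
      rw [Polynomial.eval_eq_sum_range, hS, Finset.sum_mul]
      refine (Finset.abs_sum_le_sum_abs _ _).trans (Finset.sum_le_sum fun i hi => ?_)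
      rw [abs_mul, abs_pow, abs_of_pos hup]
      refine mul_le_mul_of_nonneg_left ?_ (abs_nonneg _)
      calc (ψ z) ^ i ≤ (1+ψ z) ^ i := pow_le_pow_left₀ hup.le hut i
        _ ≤ (1+ψ z) ^ m := pow_le_pow_right₀ ht1 (by
            have := Finset.mem_range_succ_iff.mp hi; omega)
    have hb : ∀ (w : ℝ) (e : ℕ), 0 ≤ w → w ≤ 1 + ψ z → m + 1 ≤ e →
        |Q.eval (ψ z) * w / (1+ψ z) ^ e| ≤ S := by
      intro w e hw hwt he
      rw [abs_div, abs_mul, abs_of_nonneg hw, abs_of_pos (pow_pos htp e),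
        div_le_iff₀ (pow_pos htp e)]
      calc |Q.eval (ψ z)| * w ≤ (S * (1+ψ z)^m) * (1+ψ z) :=
            mul_le_mul hQb hwt hw (by positivity)
        _ = S * (1+ψ z)^(m+1) := by rw [mul_assoc, ← pow_succ]
        _ ≤ S * (1+ψ z)^e := mul_le_mul_of_nonneg_left (pow_le_pow_right₀ ht1 he) hSnn
    refine ⟨?_, ?_, ?_⟩
    · rw [hQ z]
      exact hb (ψ z) (2*m+3) hup.le hut (by omega)
    · have : iteratedDeriv (m+2) ψ z / ψ z = Q.eval (ψ z) * 1 / (1+ψ z) ^ (2*m+3) := by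
        rw [hQ z]
        field_simp
      rw [this]
      exact hb 1 (2*m+3) zero_le_one ht1 (by omega)
    · have : iteratedDeriv (m+2) ψ z / deriv ψ z = Q.eval (ψ z) * 1 / (1+ψ z) ^ (2*m+2) := by
        rw [hQ z, hderiv z]
        rw [show (2*m+3) = (2*m+2)+1 from rfl, pow_succ]
        field_simp
      rw [this]
      exact hb 1 (2*m+2) zero_le_one ht1 (by omega)
end

section
/- For every t ∈ (1, 2) the equation (t-1)·tan(w) = w has a unique solution w in the open interval (0, π). -/
open Real Set

private noncomputable def kkAux : ℝ → ℝ := fun w => w * Real.cos w / Real.sin w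

private lemma kkAux_hasDeriv (x : ℝ) (hx : x ∈ Set.Ioo 0 Real.pi) :
    HasDerivAt kkAux ((Real.sin x * Real.cos x - x) / Real.sin x ^ 2) x := by
  have hs : Real.sin x ≠ 0 := ne_of_gt (Real.sin_pos_of_pos_of_lt_pi hx.1 hx.2)
  have hu : HasDerivAt (fun w : ℝ => w * Real.cos w)
      (1 * Real.cos x + x * -Real.sin x) x :=
    (hasDerivAt_id x).mul (Real.hasDerivAt_cos x)
  have h : HasDerivAt kkAux
      (((1 * Real.cos x + x * -Real.sin x) * Real.sin x - x * Real.cos x * Real.cos x) / Real.sin x ^ 2) x :=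
    hu.div (Real.hasDerivAt_sin x) hs
  convert h using 1
  have h2 : Real.sin x ^ 2 + Real.cos x ^ 2 = 1 := Real.sin_sq_add_cos_sq x
  field_simp
  linear_combination x * h2

private lemma kkAux_contOn : ContinuousOn kkAux (Set.Ioo 0 Real.pi) := by
  apply ContinuousOn.div
  · exact (continuous_id.mul Real.continuous_cos).continuousOn
  · exact Real.continuous_sin.continuousOn
  · intro x hx
    exact ne_of_gt (Real.sin_pos_of_pos_of_lt_pi hx.1 hx.2)

private lemma kkAux_anti : StrictAntiOn kkAux (Set.Ioo 0 Real.pi) := by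
  apply strictAntiOn_of_deriv_neg (convex_Ioo 0 Real.pi) kkAux_contOn
  intro x hx
  rw [interior_Ioo] at hx
  rw [(kkAux_hasDeriv x hx).deriv]
  apply div_neg_of_neg_of_pos
  · have h1 := Real.sin_lt hx.1
    have h2 := Real.sin_pos_of_pos_of_lt_pi hx.1 hx.2
    have h3 := Real.cos_le_one x
    nlinarith
  · exact pow_pos (Real.sin_pos_of_pos_of_lt_pi hx.1 hx.2) 2

private lemma kkAux_iff (t w : ℝ) (ht : t ∈ Set.Ioo (1 : ℝ) 2)
    (hw : w ∈ Set.Ioo 0 Real.pi) :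
    (t - 1) * Real.tan w = w ↔ kkAux w = t - 1 := by
  have hsin : 0 < Real.sin w := Real.sin_pos_of_pos_of_lt_pi hw.1 hw.2
  have ha : 0 < t - 1 := by linarith [ht.1]
  constructor
  · intro h
    have hcos : Real.cos w ≠ 0 := by
      intro hc
      rw [Real.tan_eq_sin_div_cos, hc, div_zero, mul_zero] at h
      linarith [hw.1]
    rw [Real.tan_eq_sin_div_cos] at h
    have h2 : (t - 1) * Real.sin w = w * Real.cos w := by
      field_simp at h
      linarith
    unfold kkAux
    rw [← h2]
    field_simp
  · intro h
    unfold kkAux at h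
    have h2 : w * Real.cos w = (t - 1) * Real.sin w := by
      field_simp at h
      linarith
    have hcos : Real.cos w ≠ 0 := by
      intro hc
      rw [hc, mul_zero] at h2
      nlinarith
    rw [Real.tan_eq_sin_div_cos]
    field_simp
    linarith

/-- For every `t ∈ (1,2)` the equation `(t-1)·tan w = w` has a unique solution
`w` in the open interval `(0, π)`. -/
theorem tan_equation_unique_solution (t : ℝ) (ht : t ∈ Set.Ioo (1 : ℝ) 2) :
    ∃! w : ℝ, w ∈ Set.Ioo 0 Real.pi ∧ (t - 1) * Real.tan w = w := by
  obtain ⟨ht1, ht2⟩ := ht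
  have ha : 0 < t - 1 := by linarith
  have hpi := Real.pi_pos
  -- the left endpoint
  set w1 := Real.arccos (t / 2) with hw1def
  have hc1 : (0 : ℝ) < t / 2 := by linarith
  have hc2 : t / 2 < 1 := by linarith
  have hw1pos : 0 < w1 := Real.arccos_pos.mpr hc2
  have hw1le : w1 ≤ Real.pi / 2 := Real.arccos_le_pi_div_two.mpr (le_of_lt hc1)
  have hcosw1 : Real.cos w1 = t / 2 := Real.cos_arccos (by linarith) (le_of_lt hc2)
  have hsub : Set.Icc w1 (Real.pi / 2) ⊆ Set.Ioo 0 Real.pi := by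
    intro x hx
    constructor
    · linarith [hx.1]
    · linarith [hx.2]
  have hw1mem : w1 ∈ Set.Ioo 0 Real.pi := hsub ⟨le_refl _, hw1le⟩
  have hpi2mem : Real.pi / 2 ∈ Set.Ioo 0 Real.pi := hsub ⟨hw1le, le_refl _⟩
  -- values of kkAux at the endpoints
  have hk2 : kkAux (Real.pi / 2) = 0 := by
    unfold kkAux
    rw [Real.cos_pi_div_two]
    ring
  have hsinw1 : 0 < Real.sin w1 := Real.sin_pos_of_pos_of_lt_pi hw1mem.1 hw1mem.2
  have hsinlt : Real.sin w1 < w1 := Real.sin_lt hw1pos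
  have hk1 : t - 1 ≤ kkAux w1 := by
    unfold kkAux
    rw [hcosw1]
    rw [le_div_iff₀ hsinw1]
    nlinarith
  -- existence via IVT
  have hmem : (t - 1) ∈ Set.Icc (kkAux (Real.pi / 2)) (kkAux w1) := by
    rw [hk2]
    exact ⟨le_of_lt ha, hk1⟩
  obtain ⟨w, hwIcc, hkw⟩ :=
    intermediate_value_Icc' hw1le (kkAux_contOn.mono hsub) hmem
  have hwmem : w ∈ Set.Ioo 0 Real.pi := hsub hwIcc
  refine ⟨w, ⟨hwmem, (kkAux_iff t w ⟨ht1, ht2⟩ hwmem).mpr hkw⟩, ?_⟩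
  intro w' ⟨hw'mem, hw'eq⟩
  have hkw' : kkAux w' = t - 1 := (kkAux_iff t w' ⟨ht1, ht2⟩ hw'mem).mp hw'eq
  exact kkAux_anti.injOn hw'mem hwmem (hkw'.trans hkw.symm)
end

section
/- Let ψ : ℝ → (0,∞) be the inverse of y ↦ y - 1 + log y, let μ be a probability measure, and let G be a Banach space of measurable functions continuously embedded in L^1(μ). Define M as the set of finite measures P mutually absolutely continuous with μ whose density p = dP/dμ satisfies p - 1 + log p ∈ G. Then the map φ(P) = p - 1 + log p is a bijection from M onto G, with inverse a ↦ ψ(a(·)) dμ. -/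
open Real MeasureTheory Set
open scoped ENNReal

/-- Let `ψ` be the inverse of `y ↦ y - 1 + log y`, `μ` a probability measure, and `G` a
space of (equivalence classes of) integrable functions.  Let `M` be the set of finite
measures `P` mutually absolutely continuous with `μ` whose density `p` satisfies
`p - 1 + log p ∈ G`.  Then `φ(P) = p - 1 + log p` is a bijection from `M` onto `G`,
with inverse `a ↦ ψ(a(·)) dμ`:  every `a ∈ G` yields a member of `M`, every `P ∈ M`
arises this way, and the correspondence is injective modulo `μ`-null sets. -/
theorem balanced_chart_bijection {X : Type*} [MeasurableSpace X]
    (μ : Measure X) [IsProbabilityMeasure μ]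
    (ψ : ℝ → ℝ) (hψpos : ∀ z, 0 < ψ z)
    (hψinv : ∀ z, ψ z - 1 + Real.log (ψ z) = z)
    (G : Set (X → ℝ)) (hG : ∀ a ∈ G, Integrable a μ) :
    let M : Set (Measure X) := {P | IsFiniteMeasure P ∧ P ≪ μ ∧ μ ≪ P ∧
      ∃ p : X → ℝ, (∀ x, 0 < p x) ∧
        P = μ.withDensity (fun x => ENNReal.ofReal (p x)) ∧
        (fun x => p x - 1 + Real.log (p x)) ∈ G}
    (∀ a ∈ G, μ.withDensity (fun x => ENNReal.ofReal (ψ (a x))) ∈ M) ∧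
    (∀ P ∈ M, ∃ a ∈ G, P = μ.withDensity (fun x => ENNReal.ofReal (ψ (a x)))) ∧
    (∀ a ∈ G, ∀ b ∈ G,
      μ.withDensity (fun x => ENNReal.ofReal (ψ (a x)))
        = μ.withDensity (fun x => ENNReal.ofReal (ψ (b x))) → a =ᵐ[μ] b) := by
  intro M
  -- ψ is strictly monotone, hence measurable
  have hψmono : StrictMono ψ := by
    intro z w hzw
    by_contra h
    push_neg at h
    have hle : ψ w - 1 + Real.log (ψ w) ≤ ψ z - 1 + Real.log (ψ z) := by
      rcases eq_or_lt_of_le h with h' | h'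
      · rw [h']
      · have := Real.log_lt_log (hψpos w) h'
        linarith
    rw [hψinv, hψinv] at hle
    linarith
  have hψmeas : Measurable ψ := hψmono.monotone.measurable
  -- growth bound on ψ
  have hψle : ∀ z, ψ z ≤ 2 + |z| := by
    intro z
    rcases le_or_gt (ψ z) 1 with h | h
    · linarith [abs_nonneg z]
    · have hlog : 0 ≤ Real.log (ψ z) := Real.log_nonneg h.le
      have h1 := hψinv z
      have h2 := le_abs_self z
      linarith
  -- ψ is a left inverse on the positives
  have hψg : ∀ y : ℝ, 0 < y → ψ (y - 1 + Real.log y) = y := by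
    intro y hy
    have h1 := hψinv (y - 1 + Real.log y)
    by_contra hne
    rcases lt_or_gt_of_ne hne with h | h
    · have := Real.log_lt_log (hψpos _) h; linarith
    · have := Real.log_lt_log hy h; linarith
  have key : ∀ a ∈ G, AEMeasurable (fun x => ENNReal.ofReal (ψ (a x))) μ ∧
      ∫⁻ x, ENNReal.ofReal (ψ (a x)) ∂μ ≠ ⊤ := by
    intro a ha
    have hma : AEMeasurable a μ := (hG a ha).aemeasurable
    have hmeas : AEMeasurable (fun x => ENNReal.ofReal (ψ (a x))) μ :=
      (ENNReal.measurable_ofReal.comp hψmeas).comp_aemeasurable hma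
    refine ⟨hmeas, ?_⟩
    have hb : ∫⁻ x, ENNReal.ofReal (ψ (a x)) ∂μ
        ≤ ∫⁻ x, ((2 : ℝ≥0∞) + ‖a x‖₊) ∂μ := by
      refine lintegral_mono fun x => ?_
      calc ENNReal.ofReal (ψ (a x)) ≤ ENNReal.ofReal (2 + |a x|) :=
            ENNReal.ofReal_le_ofReal (hψle _)
        _ = ENNReal.ofReal 2 + ENNReal.ofReal |a x| :=
            ENNReal.ofReal_add (by norm_num) (abs_nonneg _)
        _ = (2 : ℝ≥0∞) + ‖a x‖₊ := by
            rw [ENNReal.ofReal_ofNat, ← Real.enorm_eq_ofReal_abs, enorm_eq_nnnorm]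
    have hsum : ∫⁻ x, ((2 : ℝ≥0∞) + ‖a x‖₊) ∂μ
        = (2 : ℝ≥0∞) * μ Set.univ + ∫⁻ x, (‖a x‖₊ : ℝ≥0∞) ∂μ := by
      rw [lintegral_add_left measurable_const, lintegral_const]
    have hfin : ∫⁻ x, (‖a x‖₊ : ℝ≥0∞) ∂μ < ⊤ := (hG a ha).2
    refine ne_of_lt (lt_of_le_of_lt hb ?_)
    rw [hsum]
    exact ENNReal.add_lt_top.mpr ⟨by simp [measure_lt_top], hfin⟩
  refine ⟨?_, ?_, ?_⟩
  · -- every a ∈ G gives a member of M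
    intro a ha
    obtain ⟨hmeas, hfin⟩ := key a ha
    refine ⟨isFiniteMeasure_withDensity hfin, withDensity_absolutelyContinuous _ _,
      withDensity_absolutelyContinuous' hmeas ?_, fun x => ψ (a x),
      fun x => hψpos _, rfl, ?_⟩
    · exact Filter.Eventually.of_forall fun x =>
        ne_of_gt (ENNReal.ofReal_pos.mpr (hψpos _))
    · have : (fun x => ψ (a x) - 1 + Real.log (ψ (a x))) = a := funext fun x => hψinv _
      rw [this]; exact ha
  · -- every P ∈ M arises this way
    rintro P ⟨hfin, hPμ, hμP, p, hp, hPd, hpG⟩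
    refine ⟨fun x => p x - 1 + Real.log (p x), hpG, ?_⟩
    rw [hPd]
    congr 1
    funext x
    rw [hψg (p x) (hp x)]
  · -- injectivity mod null sets
    intro a ha b hb h
    have hab := (withDensity_eq_iff_of_sigmaFinite (key a ha).1 (key b hb).1).mp h
    filter_upwards [hab] with x hx
    have hxy : ψ (a x) = ψ (b x) := by
      rwa [ENNReal.ofReal_eq_ofReal_iff (hψpos _).le (hψpos _).le] at hx
    calc a x = ψ (a x) - 1 + Real.log (ψ (a x)) := (hψinv _).symm
      _ = ψ (b x) - 1 + Real.log (ψ (b x)) := by rw [hxy]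
      _ = b x := hψinv _
end

section
/- Let P, Q be finite measures mutually absolutely continuous with a probability measure μ, with densities p, q such that φ(P) := p - 1 + log p and φ(Q) := q - 1 + log q lie in L²(μ). Then D(P|Q) + D(Q|P) = ⟨(p−q), (log p − log q)⟩_{L²(μ)} ≤ (1/2)‖φ(P) − φ(Q)‖²_{L²(μ)}, where D(P|Q) = Q(ℝ^d) − P(ℝ^d) + ∫ p log(p/q) dμ is the extended KL divergence for finite measures. -/
open Real MeasureTheory

/-- For finite measures `P, Q ≪≫ μ` with densities `p, q` such that the balanced charts
`φ(P) = p - 1 + log p` and `φ(Q) = q - 1 + log q` lie in `L²(μ)`, the symmetrised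
extended KL divergence satisfies
`D(P|Q) + D(Q|P) = ⟨p − q, log p − log q⟩_{L²(μ)} ≤ (1/2)‖φ(P) − φ(Q)‖²_{L²(μ)}`,
where `D(P|Q) = Q(ℝ^d) − P(ℝ^d) + ∫ p log(p/q) dμ`. -/
theorem symmetrised_KL_bound {X : Type*} [MeasurableSpace X]
    (μ : Measure X) [IsProbabilityMeasure μ]
    (p q : X → ℝ) (hp : ∀ x, 0 < p x) (hq : ∀ x, 0 < q x)
    (hpm : Measurable p) (hqm : Measurable q)
    (hpL : MemLp (fun x => p x - 1 + Real.log (p x)) 2 μ)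
    (hqL : MemLp (fun x => q x - 1 + Real.log (q x)) 2 μ)
    (hint : Integrable (fun x => p x * (Real.log (p x) - Real.log (q x))) μ)
    (hint' : Integrable (fun x => q x * (Real.log (q x) - Real.log (p x))) μ) :
    ((∫ x, q x ∂μ) - (∫ x, p x ∂μ) + ∫ x, p x * (Real.log (p x) - Real.log (q x)) ∂μ)
      + ((∫ x, p x ∂μ) - (∫ x, q x ∂μ) + ∫ x, q x * (Real.log (q x) - Real.log (p x)) ∂μ)
      = ∫ x, (p x - q x) * (Real.log (p x) - Real.log (q x)) ∂μ ∧
    ∫ x, (p x - q x) * (Real.log (p x) - Real.log (q x)) ∂μ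
      ≤ (1 / 2) * ∫ x, ((p x - 1 + Real.log (p x)) - (q x - 1 + Real.log (q x))) ^ 2 ∂μ := by
  have hsum : ∀ x, (p x - q x) * (Real.log (p x) - Real.log (q x))
      = p x * (Real.log (p x) - Real.log (q x)) + q x * (Real.log (q x) - Real.log (p x)) := by
    intro x; ring
  have hI : Integrable (fun x => (p x - q x) * (Real.log (p x) - Real.log (q x))) μ := by
    simpa [hsum, Pi.add_def] using hint.add hint'
  have heq : ∫ x, (p x - q x) * (Real.log (p x) - Real.log (q x)) ∂μ
      = (∫ x, p x * (Real.log (p x) - Real.log (q x)) ∂μ)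
        + ∫ x, q x * (Real.log (q x) - Real.log (p x)) ∂μ := by
    simp_rw [hsum]
    exact integral_add hint hint'
  constructor
  · rw [heq]; ring
  · have hsq : Integrable
        (fun x => ((p x - 1 + Real.log (p x)) - (q x - 1 + Real.log (q x))) ^ 2) μ := by
      have := (hpL.sub hqL).integrable_sq
      simpa [pow_two] using this
    have hbound : ∀ x, (p x - q x) * (Real.log (p x) - Real.log (q x))
        ≤ (1 / 2) * ((p x - 1 + Real.log (p x)) - (q x - 1 + Real.log (q x))) ^ 2 := by
      intro x; nlinarith [sq_nonneg (p x - q x - (Real.log (p x) - Real.log (q x)))]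
    calc ∫ x, (p x - q x) * (Real.log (p x) - Real.log (q x)) ∂μ
        ≤ ∫ x, (1 / 2) * ((p x - 1 + Real.log (p x)) - (q x - 1 + Real.log (q x))) ^ 2 ∂μ :=
          integral_mono hI (hsq.const_mul _) hbound
      _ = (1 / 2) * ∫ x, ((p x - 1 + Real.log (p x)) - (q x - 1 + Real.log (q x))) ^ 2 ∂μ :=
          MeasureTheory.integral_const_mul _ _
end

section
/- Let λ ≥ 1 and define f : (0,∞) → ℝ by f(z) = (−log z)^λ for z ∈ (0,1) and f(z) = (z−1)^λ for z ≥ 1. Then |log z|^λ ≤ f(z) for all z > 0, and f is convex on (0,∞). -/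
open Real Set

/-- For `λ ≥ 1`, the function `f(z) = (−log z)^λ` on `(0,1)`, `f(z) = (z−1)^λ` on `[1,∞)`,
dominates `|log z|^λ` on `(0,∞)` and is convex on `(0,∞)`. -/
theorem log_dominating_convex_function (l : ℝ) (hl : 1 ≤ l) :
    (∀ z : ℝ, 0 < z →
      |Real.log z| ^ l ≤ (if z < 1 then (-Real.log z) ^ l else (z - 1) ^ l)) ∧
    ConvexOn ℝ (Set.Ioi (0 : ℝ))
      (fun z : ℝ => if z < 1 then (-Real.log z) ^ l else (z - 1) ^ l) := by
  set g : ℝ → ℝ := fun z => max (-Real.log z) (z - 1) with hg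
  -- the piecewise function equals g ^ l on (0, ∞)
  have hfg : ∀ z : ℝ, 0 < z →
      (if z < 1 then (-Real.log z) ^ l else (z - 1) ^ l) = g z ^ l := by
    intro z hz
    by_cases h : z < 1
    · have hlog : Real.log z < 0 := Real.log_neg hz h
      have : g z = -Real.log z := by
        simp only [hg]
        exact max_eq_left (by linarith)
      rw [if_pos h, this]
    · push_neg at h
      have hlog : 0 ≤ Real.log z := Real.log_nonneg h
      have : g z = z - 1 := by
        simp only [hg]
        exact max_eq_right (by linarith)
      rw [if_neg (not_lt.mpr h), this]
  have hg_nonneg : ∀ z : ℝ, 0 < z → 0 ≤ g z := by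
    intro z hz
    by_cases h : z < 1
    · have hlog : Real.log z < 0 := Real.log_neg hz h
      exact le_max_of_le_left (by linarith)
    · push_neg at h
      exact le_max_of_le_right (by linarith)
  -- g is convex on (0, ∞)
  have hline : ConvexOn ℝ (Set.Ioi (0 : ℝ)) (fun z : ℝ => z - 1) := by
    refine ⟨convex_Ioi 0, ?_⟩
    intro x _ y _ a b ha hb hab
    simp only [smul_eq_mul]
    nlinarith
  have hneglog : ConvexOn ℝ (Set.Ioi (0 : ℝ)) (fun z : ℝ => -Real.log z) :=
    strictConcaveOn_log_Ioi.concaveOn.neg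
  have hg_conv : ConvexOn ℝ (Set.Ioi (0 : ℝ)) g := by
    have := hneglog.sup hline
    refine ⟨this.1, ?_⟩
    intro x hx y hy a b ha hb hab
    exact this.2 hx hy ha hb hab
  constructor
  · -- domination
    intro z hz
    rw [hfg z hz]
    by_cases h : z < 1
    · have hlog : Real.log z < 0 := Real.log_neg hz h
      have h1 : |Real.log z| = -Real.log z := abs_of_neg hlog
      have h2 : g z = -Real.log z := by
        simp only [hg]; exact max_eq_left (by linarith)
      rw [h1, h2]
    · push_neg at h
      have hlog : 0 ≤ Real.log z := Real.log_nonneg h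
      have h1 : |Real.log z| = Real.log z := abs_of_nonneg hlog
      have h2 : g z = z - 1 := by
        simp only [hg]; exact max_eq_right (by linarith)
      rw [h1, h2]
      exact Real.rpow_le_rpow hlog (Real.log_le_sub_one_of_pos (by linarith)) (by linarith)
  · -- convexity
    refine ⟨convex_Ioi 0, ?_⟩
    intro x hx y hy a b ha hb hab
    have hmem : a • x + b • y ∈ Set.Ioi (0 : ℝ) := (convex_Ioi 0) hx hy ha hb hab
    dsimp only
    rw [hfg x hx, hfg y hy, hfg _ hmem]
    have h1 : g (a • x + b • y) ^ l ≤ (a * g x + b * g y) ^ l := by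
      apply Real.rpow_le_rpow (hg_nonneg _ hmem)
      · have := hg_conv.2 hx hy ha hb hab
        simpa using this
      · linarith
    have h2 : (a * g x + b * g y) ^ l ≤ a * g x ^ l + b * g y ^ l := by
      have := (convexOn_rpow hl).2 (Set.mem_Ici.mpr (hg_nonneg x hx))
        (Set.mem_Ici.mpr (hg_nonneg y hy)) ha hb hab
      simpa using this
    calc g (a • x + b • y) ^ l ≤ (a * g x + b * g y) ^ l := h1
      _ ≤ a * g x ^ l + b * g y ^ l := h2
      _ = a • g x ^ l + b • g y ^ l := by simp [smul_eq_mul]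
end

section
/- Let ψ_K(z) = z + √(1+z²). For every n ≥ 2 there is a polynomial Q of degree at most 3(n−2) such that the n-th derivative satisfies ψ_K^(n) = Q(ψ_K)·ψ_K·ψ_K' / (1 + ψ_K²)^{2(n−1)}. Consequently, for each n ≥ 2, the functions ψ_K^(n), ψ_K^(n)/ψ_K and ψ_K^(n)/(ψ_K·ψ_K') are bounded on ℝ. -/
open Real Polynomial

/-- The Kaniadakis 1-exponential `ψ_K(z) = z + √(1+z²)`. -/
noncomputable def psiK (z : ℝ) : ℝ := z + Real.sqrt (1 + z ^ 2)

lemma psiK_pos (z : ℝ) : 0 < psiK z := by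
  have h : |z| < Real.sqrt (1 + z ^ 2) := by
    rw [← Real.sqrt_sq_eq_abs]
    exact Real.sqrt_lt_sqrt (sq_nonneg z) (by linarith)
  have h2 := neg_abs_le z
  unfold psiK; linarith

lemma one_add_psiK_sq (z : ℝ) :
    1 + psiK z ^ 2 = 2 * Real.sqrt (1 + z ^ 2) * psiK z := by
  have hs : Real.sqrt (1 + z ^ 2) ^ 2 = 1 + z ^ 2 :=
    Real.sq_sqrt (by positivity)
  unfold psiK; nlinarith [hs]

lemma hasDerivAt_psiK (z : ℝ) :
    HasDerivAt psiK (2 * psiK z ^ 2 / (1 + psiK z ^ 2)) z := by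
  have hpos : (0:ℝ) < 1 + z ^ 2 := by positivity
  have hs : 0 < Real.sqrt (1 + z ^ 2) := Real.sqrt_pos.2 hpos
  have h1 : HasDerivAt (fun z : ℝ => 1 + z ^ 2) (2 * z) z := by
    simpa using ((hasDerivAt_pow 2 z).const_add 1)
  have h2 : HasDerivAt (fun z : ℝ => Real.sqrt (1 + z ^ 2))
      (2 * z / (2 * Real.sqrt (1 + z ^ 2))) z := h1.sqrt (ne_of_gt hpos)
  have h3 : HasDerivAt psiK (1 + 2 * z / (2 * Real.sqrt (1 + z ^ 2))) z :=
    (hasDerivAt_id z).add h2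
  convert h3 using 1
  rw [one_add_psiK_sq]
  have hψ := psiK_pos z
  have hsq : Real.sqrt (1 + z ^ 2) ^ 2 = 1 + z ^ 2 := Real.sq_sqrt (by positivity)
  unfold psiK at *
  field_simp
  nlinarith [hsq]

lemma pow_le_aux {u : ℝ} (hu : 0 ≤ u) {i D : ℕ} (h : i ≤ 2 * D) :
    u ^ i ≤ (1 + u ^ 2) ^ D := by
  rcases le_total u 1 with h1 | h1
  · calc u ^ i ≤ 1 := pow_le_one₀ hu h1
      _ ≤ (1 + u ^ 2) ^ D := one_le_pow₀ (by nlinarith)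
  · calc u ^ i ≤ u ^ (2 * D) := pow_le_pow_right₀ h1 h
      _ = (u ^ 2) ^ D := by rw [pow_mul]
      _ ≤ (1 + u ^ 2) ^ D := pow_le_pow_left₀ (by positivity) (by linarith) D

lemma eval_abs_le (Q : ℝ[X]) (D : ℕ) (hdeg : Q.natDegree ≤ 2 * D) (u : ℝ) (hu : 0 ≤ u) :
    |Q.eval u| ≤ (∑ i ∈ Q.support, |Q.coeff i|) * (1 + u ^ 2) ^ D := by
  rw [Polynomial.eval_eq_sum, Polynomial.sum, Finset.sum_mul]
  refine le_trans (Finset.abs_sum_le_sum_abs _ _) (Finset.sum_le_sum fun i hi => ?_)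
  rw [abs_mul, abs_pow, abs_of_nonneg hu]
  have hiD : i ≤ 2 * D := le_trans (Polynomial.le_natDegree_of_mem_supp i hi) hdeg
  exact mul_le_mul_of_nonneg_left (pow_le_aux hu hiD) (abs_nonneg _)

lemma deriv_step (P : ℝ[X]) (j : ℕ) (f : ℝ → ℝ)
    (hf : ∀ z, f z = P.eval (psiK z) / (1 + psiK z ^ 2) ^ (j + 1)) (z : ℝ) :
    deriv f z =
      (C 2 * X ^ 2 * (P.derivative * (1 + X ^ 2)
          - C (2 * (j + 1) : ℝ) * (X * P))).eval (psiK z)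
        / (1 + psiK z ^ 2) ^ (j + 3) := by
  have hfun : f = fun z => P.eval (psiK z) / (1 + psiK z ^ 2) ^ (j + 1) := funext hf
  rw [hfun]
  have hψ := hasDerivAt_psiK z
  have hv : (0:ℝ) < 1 + psiK z ^ 2 := by positivity
  have hnum : HasDerivAt (fun z => P.eval (psiK z))
      (P.derivative.eval (psiK z) * (2 * psiK z ^ 2 / (1 + psiK z ^ 2))) z :=
    (P.hasDerivAt (psiK z)).comp z hψ
  have hbase : HasDerivAt (fun z => 1 + psiK z ^ 2)
      (2 * psiK z * (2 * psiK z ^ 2 / (1 + psiK z ^ 2))) z := by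
    simpa using ((hψ.pow 2).const_add 1)
  have hden : HasDerivAt (fun z => (1 + psiK z ^ 2) ^ (j + 1))
      (((j:ℝ) + 1) * (1 + psiK z ^ 2) ^ j * (2 * psiK z * (2 * psiK z ^ 2 / (1 + psiK z ^ 2)))) z := by
    have := hbase.fun_pow (j + 1)
    simpa using this
  have hne : (1 + psiK z ^ 2) ^ (j + 1) ≠ 0 := by positivity
  rw [(hnum.fun_div hden hne).deriv]
  simp only [eval_mul, eval_sub, eval_add, eval_pow, eval_C, eval_X, eval_one]
  push_cast
  field_simp
  ring

lemma psiK_key (k : ℕ) : ∃ Q : ℝ[X], Q.natDegree ≤ 3 * k ∧ ∀ z,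
    iteratedDeriv (k + 2) psiK z
      = (C 2 * X ^ 3 * Q).eval (psiK z) / (1 + psiK z ^ 2) ^ (2 * k + 3) := by
  induction k with
  | zero =>
    refine ⟨C 4, by simp, fun z => ?_⟩
    have h1 : ∀ z, deriv psiK z
        = (C 2 * X ^ 2 : ℝ[X]).eval (psiK z) / (1 + psiK z ^ 2) ^ (0 + 1) := by
      intro z
      rw [(hasDerivAt_psiK z).deriv]
      simp
    have h2 := deriv_step (C 2 * X ^ 2) 0 (deriv psiK) h1 z
    have h3 : iteratedDeriv (0 + 2) psiK = deriv (deriv psiK) := by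
      rw [show (0 + 2 : ℕ) = 1 + 1 from rfl, iteratedDeriv_succ, iteratedDeriv_one]
    rw [h3, h2, show (2 * 0 + 3 : ℕ) = 0 + 3 from rfl]
    congr 1
    simp only [derivative_mul, derivative_C, derivative_X_pow, zero_mul, zero_add,
      mul_zero, add_zero, eval_mul, eval_sub, eval_add, eval_pow, eval_C, eval_X, eval_one]
    push_cast
    ring
  | succ k ih =>
    obtain ⟨Q, hdeg, hQ⟩ := ih
    refine ⟨(C 6 * X * Q + C 2 * X ^ 2 * derivative Q) * (1 + X ^ 2)
        - C (4 * (2 * (k:ℝ) + 3)) * X ^ 3 * Q, ?_, fun z => ?_⟩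
    · -- degree bound
      have hA : natDegree (C (6:ℝ) * X * Q) ≤ 3 * k + 1 := by
        calc natDegree (C (6:ℝ) * X * Q) ≤ natDegree (C (6:ℝ) * X) + natDegree Q :=
              natDegree_mul_le
          _ ≤ 1 + 3 * k := by
              have : natDegree (C (6:ℝ) * X) ≤ 1 := by compute_degree
              omega
          _ ≤ 3 * k + 1 := by omega
      have hB : natDegree (C (2:ℝ) * X ^ 2 * derivative Q) ≤ 3 * k + 1 := by
        by_cases h : derivative Q = 0
        · simp [h]
        · have h0 : Q.natDegree ≠ 0 := by
            intro h0
            exact h (by rw [Polynomial.eq_C_of_natDegree_eq_zero h0]; simp)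
          have hlt := Polynomial.natDegree_derivative_lt h0
          calc natDegree (C (2:ℝ) * X ^ 2 * derivative Q)
              ≤ natDegree (C (2:ℝ) * X ^ 2) + natDegree (derivative Q) := natDegree_mul_le
            _ ≤ 2 + natDegree (derivative Q) := by
                have : natDegree (C (2:ℝ) * X ^ 2) ≤ 2 := by compute_degree
                omega
            _ ≤ 3 * k + 1 := by omega
      have hsum : natDegree (C (6:ℝ) * X * Q + C 2 * X ^ 2 * derivative Q) ≤ 3 * k + 1 :=
        le_trans (natDegree_add_le _ _) (by omega)
      have hL : natDegree ((C (6:ℝ) * X * Q + C 2 * X ^ 2 * derivative Q) * (1 + X ^ 2))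
          ≤ 3 * k + 3 := by
        calc natDegree ((C (6:ℝ) * X * Q + C 2 * X ^ 2 * derivative Q) * (1 + X ^ 2))
            ≤ _ + natDegree (1 + X ^ 2 : ℝ[X]) := natDegree_mul_le
          _ ≤ 3 * k + 3 := by
              have : natDegree (1 + X ^ 2 : ℝ[X]) ≤ 2 := by compute_degree
              omega
      have hR : natDegree (C (4 * (2 * (k:ℝ) + 3)) * X ^ 3 * Q) ≤ 3 * k + 3 := by
        calc natDegree (C (4 * (2 * (k:ℝ) + 3)) * X ^ 3 * Q)
            ≤ natDegree (C (4 * (2 * (k:ℝ) + 3)) * X ^ 3) + natDegree Q := natDegree_mul_le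
          _ ≤ 3 * k + 3 := by
              have : natDegree (C (4 * (2 * (k:ℝ) + 3)) * X ^ 3) ≤ 3 := by compute_degree
              omega
      calc natDegree _ ≤ max _ _ := natDegree_sub_le _ _
        _ ≤ 3 * (k + 1) := by omega
    · -- formula
      have hf : ∀ z, iteratedDeriv (k + 2) psiK z
          = (C 2 * X ^ 3 * Q).eval (psiK z) / (1 + psiK z ^ 2) ^ (2 * k + 2 + 1) := by
        intro z; rw [hQ z]
      have h2 := deriv_step (C 2 * X ^ 3 * Q) (2 * k + 2) (iteratedDeriv (k + 2) psiK) hf z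
      have h3 : iteratedDeriv (k + 1 + 2) psiK = deriv (iteratedDeriv (k + 2) psiK) := by
        rw [show k + 1 + 2 = (k + 2) + 1 from rfl, iteratedDeriv_succ]
      have he : 2 * k + 2 + 3 = 2 * (k + 1) + 3 := by omega
      rw [h3, h2, he]
      congr 1
      simp only [derivative_mul, derivative_C, derivative_X_pow, zero_mul, zero_add,
        mul_zero, add_zero, eval_mul, eval_sub, eval_add, eval_pow, eval_C, eval_X, eval_one]
      push_cast
      ring

/-- For every `n ≥ 2` there is a polynomial `Q` of degree at most `3(n−2)` with
`ψ_K⁽ⁿ⁾ = Q(ψ_K)·ψ_K·ψ_K' / (1+ψ_K²)^{2(n−1)}`; consequently `ψ_K⁽ⁿ⁾`, `ψ_K⁽ⁿ⁾/ψ_K`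
and `ψ_K⁽ⁿ⁾/(ψ_K·ψ_K')` are bounded on `ℝ`. -/
theorem psiK_higher_derivatives :
    ∀ n : ℕ, 2 ≤ n →
      (∃ Q : Polynomial ℝ, Q.natDegree ≤ 3 * (n - 2) ∧
        ∀ z : ℝ, iteratedDeriv n psiK z
          = Q.eval (psiK z) * psiK z * deriv psiK z / (1 + psiK z ^ 2) ^ (2 * (n - 1))) ∧
      (∃ C : ℝ, ∀ z : ℝ,
        |iteratedDeriv n psiK z| ≤ C ∧
        |iteratedDeriv n psiK z / psiK z| ≤ C ∧
        |iteratedDeriv n psiK z / (psiK z * deriv psiK z)| ≤ C) := by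
  intro n hn
  obtain ⟨m, rfl⟩ : ∃ m, n = m + 2 := ⟨n - 2, by omega⟩
  obtain ⟨Q, hdeg, hQ⟩ := psiK_key m
  have hform : ∀ z : ℝ, iteratedDeriv (m + 2) psiK z
      = Q.eval (psiK z) * psiK z * deriv psiK z / (1 + psiK z ^ 2) ^ (2 * (m + 2 - 1)) := by
    intro z
    have hv : (0:ℝ) < 1 + psiK z ^ 2 := by positivity
    rw [hQ z, (hasDerivAt_psiK z).deriv, show 2 * (m + 2 - 1) = 2 * m + 2 from by omega]
    simp only [eval_mul, eval_pow, eval_C, eval_X]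
    field_simp
    ring
  refine ⟨⟨Q, by omega, hform⟩, ?_⟩
  set S : ℝ := ∑ i ∈ Q.support, |Q.coeff i| with hS
  have hS0 : 0 ≤ S := Finset.sum_nonneg fun i _ => abs_nonneg _
  refine ⟨2 * S, fun z => ?_⟩
  have hu : 0 < psiK z := psiK_pos z
  have hv : (0:ℝ) < 1 + psiK z ^ 2 := by positivity
  have hv1 : (1:ℝ) ≤ 1 + psiK z ^ 2 := by nlinarith
  set u := psiK z
  set v := 1 + u ^ 2 with hvdef
  have hw : deriv psiK z = 2 * u ^ 2 / v := (hasDerivAt_psiK z).deriv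
  have hw0 : 0 < deriv psiK z := by rw [hw]; positivity
  have hw2 : deriv psiK z ≤ 2 := by
    rw [hw, div_le_iff₀ hv]; nlinarith
  have hq : |Q.eval u| ≤ S * v ^ (2 * m + 1) :=
    eval_abs_le Q (2 * m + 1) (by omega) u hu.le
  have hE : iteratedDeriv (m + 2) psiK z
      = Q.eval u * u * deriv psiK z / v ^ (2 * m + 2) := by
    rw [hform z, show 2 * (m + 2 - 1) = 2 * m + 2 from by omega]
  have hvp : (0:ℝ) < v ^ (2 * m + 2) := by positivity
  have hbound : ∀ a : ℝ, 0 ≤ a → a ≤ 2 * v →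
      |Q.eval u| * a / v ^ (2 * m + 2) ≤ 2 * S := by
    intro a ha0 ha
    rw [div_le_iff₀ hvp]
    calc |Q.eval u| * a ≤ S * v ^ (2 * m + 1) * (2 * v) :=
          mul_le_mul hq ha ha0 (by positivity)
      _ = 2 * S * v ^ (2 * m + 2) := by ring
  have huv : u ≤ v := by rw [hvdef]; nlinarith
  refine ⟨?_, ?_, ?_⟩
  · have h1 : |iteratedDeriv (m + 2) psiK z|
        = |Q.eval u| * (u * deriv psiK z) / v ^ (2 * m + 2) := by
      rw [hE, abs_div, abs_mul, abs_mul, abs_of_pos hu, abs_of_pos hw0, abs_of_pos hvp]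
      ring
    rw [h1]
    exact hbound _ (by positivity) (by nlinarith)
  · have h1 : |iteratedDeriv (m + 2) psiK z / psiK z|
        = |Q.eval u| * deriv psiK z / v ^ (2 * m + 2) := by
      rw [hE]
      rw [show Q.eval u * u * deriv psiK z / v ^ (2 * m + 2) / u
          = Q.eval u * deriv psiK z / v ^ (2 * m + 2) from by field_simp]
      rw [abs_div, abs_mul, abs_of_pos hw0, abs_of_pos hvp]
    rw [h1]
    exact hbound _ hw0.le (by nlinarith)
  · have h1 : |iteratedDeriv (m + 2) psiK z / (psiK z * deriv psiK z)|
        = |Q.eval u| * 1 / v ^ (2 * m + 2) := by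
      rw [hE]
      rw [show Q.eval u * u * deriv psiK z / v ^ (2 * m + 2) / (u * deriv psiK z)
          = Q.eval u / v ^ (2 * m + 2) from by field_simp]
      rw [abs_div, abs_of_pos hvp, mul_one]
    rw [h1]
    exact hbound _ zero_le_one (by nlinarith)
end

section
/- Let ψ be the inverse of y ↦ y − 1 + log y, let μ be a probability measure, and let G₀ be a Banach space of measurable functions with ∫ a dμ = 0 for all a ∈ G₀, continuously embedded in L¹(μ). For each a ∈ G₀ the function z ↦ ∫ ψ(a + z) dμ is a strictly increasing continuous bijection from ℝ onto (0,∞); consequently there is a unique Z(a) ∈ ℝ with ∫ ψ(a + Z(a)) dμ = 1, so that p = ψ(a + Z(a)) is a probability density with respect to μ. -/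
open Real MeasureTheory Set

/-- Normalisation for the deformed exponential model: if `ψ` is the inverse of
`y ↦ y − 1 + log y`, `μ` a probability measure, and `a` an integrable function with
`∫ a dμ = 0`, then `z ↦ ∫ ψ(a + z) dμ` is a strictly increasing continuous bijection
from `ℝ` onto `(0,∞)`, and there is a unique `Z` with `∫ ψ(a + Z) dμ = 1`. -/
theorem deformed_exponential_normalisation {X : Type*} [MeasurableSpace X]
    (μ : Measure X) [IsProbabilityMeasure μ]
    (ψ : ℝ → ℝ) (hpos : ∀ z, 0 < ψ z)
    (hinv : ∀ z, ψ z - 1 + Real.log (ψ z) = z)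
    (G₀ : Set (X → ℝ))
    (hG : ∀ a ∈ G₀, Integrable a μ ∧ ∫ x, a x ∂μ = 0) :
    ∀ a ∈ G₀,
      StrictMono (fun z : ℝ => ∫ x, ψ (a x + z) ∂μ) ∧
      Continuous (fun z : ℝ => ∫ x, ψ (a x + z) ∂μ) ∧
      Set.BijOn (fun z : ℝ => ∫ x, ψ (a x + z) ∂μ) Set.univ (Set.Ioi 0) ∧
      ∃! Z : ℝ, ∫ x, ψ (a x + Z) ∂μ = 1 := by
  intro a ha
  obtain ⟨hai, ha0⟩ := hG a ha
  -- if ψ u ≤ ψ v then u ≤ v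
  have hle : ∀ u v : ℝ, ψ u ≤ ψ v → u ≤ v := by
    intro u v h
    have hl : Real.log (ψ u) ≤ Real.log (ψ v) := Real.log_le_log (hpos u) h
    have h1 := hinv u
    have h2 := hinv v
    linarith
  have hmono : StrictMono ψ := by
    intro u v huv
    by_contra h
    exact absurd (hle v u (not_lt.mp h)) (not_le.mpr huv)
  have hlipp : ∀ u v : ℝ, u ≤ v → ψ v - ψ u ≤ v - u := by
    intro u v h
    have hmle : ψ u ≤ ψ v := hmono.monotone h
    have hl : Real.log (ψ u) ≤ Real.log (ψ v) := Real.log_le_log (hpos u) hmle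
    have h1 := hinv u
    have h2 := hinv v
    linarith
  have hlip : ∀ u v : ℝ, |ψ u - ψ v| ≤ |u - v| := by
    intro u v
    rcases le_total u v with h | h
    · have h1 := hlipp u v h
      have h2 := hmono.monotone h
      rw [abs_sub_comm, abs_sub_comm u, abs_of_nonneg (sub_nonneg.mpr h2),
        abs_of_nonneg (sub_nonneg.mpr h)]
      linarith
    · have h1 := hlipp v u h
      have h2 := hmono.monotone h
      rw [abs_of_nonneg (sub_nonneg.mpr h2), abs_of_nonneg (sub_nonneg.mpr h)]
      linarith
  have hlipW : LipschitzWith 1 ψ := by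
    apply LipschitzWith.of_dist_le_mul
    intro u v
    simp only [Real.dist_eq, NNReal.coe_one, one_mul]
    exact hlip u v
  have hcontψ : Continuous ψ := hlipW.continuous
  -- ψ z ≤ exp (z + 1)
  have hub : ∀ z, ψ z ≤ Real.exp (z + 1) := by
    intro z
    have h1 : Real.log (ψ z) ≤ z + 1 := by nlinarith [hinv z, hpos z]
    calc ψ z = Real.exp (Real.log (ψ z)) := (Real.exp_log (hpos z)).symm
      _ ≤ Real.exp (z + 1) := Real.exp_le_exp.mpr h1
  -- z + 2 ≤ 2 * ψ z
  have hlb : ∀ z, z + 2 ≤ 2 * ψ z := by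
    intro z
    have h1 := Real.log_le_sub_one_of_pos (hpos z)
    nlinarith [hinv z]
  -- integrability
  have hint : ∀ z : ℝ, Integrable (fun x => ψ (a x + z)) μ := by
    intro z
    have hm : AEStronglyMeasurable (fun x => ψ (a x + z)) μ :=
      hcontψ.comp_aestronglyMeasurable (hai.aestronglyMeasurable.add aestronglyMeasurable_const)
    refine (hai.abs.add (integrable_const (ψ 0 + |z|))).mono hm ?_
    filter_upwards with x
    have h1 := abs_le.mp (hlip (a x + z) 0)
    have h2 : |a x + z| ≤ |a x| + |z| := abs_add_le _ _
    have h3 := abs_le.mp (le_refl |a x + z|)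
    simp only [Pi.add_apply, Real.norm_eq_abs]
    have hψ0 := hpos 0
    rw [abs_of_pos (hpos _), abs_of_nonneg (by positivity : (0:ℝ) ≤ |a x| + (ψ 0 + |z|))]
    simp only [sub_zero] at h1
    linarith [h1.2]
  set F : ℝ → ℝ := fun z => ∫ x, ψ (a x + z) ∂μ with hFdef
  have hFmono : StrictMono F := by
    intro z1 z2 h
    have hdiff : 0 < ∫ x, (ψ (a x + z2) - ψ (a x + z1)) ∂μ := by
      rw [integral_pos_iff_support_of_nonneg
        (fun x => sub_nonneg.mpr (hmono.monotone (by linarith)))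
        ((hint z2).sub (hint z1))]
      have : Function.support (fun x => ψ (a x + z2) - ψ (a x + z1)) = Set.univ := by
        ext x
        simp only [Function.mem_support, Set.mem_univ, iff_true]
        exact sub_ne_zero.mpr (ne_of_gt (hmono (by linarith)))
      rw [this]
      simp
    have heq := integral_sub (hint z2) (hint z1)
    rw [heq] at hdiff
    simp only [hFdef]
    linarith
  have hFlip : LipschitzWith 1 F := by
    apply LipschitzWith.of_dist_le_mul
    intro z1 z2
    simp only [Real.dist_eq, NNReal.coe_one, one_mul]
    have hsub : F z1 - F z2 = ∫ x, (ψ (a x + z1) - ψ (a x + z2)) ∂μ :=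
      (integral_sub (hint z1) (hint z2)).symm
    rw [hsub]
    calc |∫ x, (ψ (a x + z1) - ψ (a x + z2)) ∂μ|
        ≤ ∫ x, |ψ (a x + z1) - ψ (a x + z2)| ∂μ := by
          simpa [Real.norm_eq_abs] using
            norm_integral_le_integral_norm (fun x => ψ (a x + z1) - ψ (a x + z2)) (μ := μ)
      _ ≤ ∫ _x, |z1 - z2| ∂μ := by
          apply integral_mono ((hint z1).sub (hint z2)).abs (integrable_const _)
          intro x
          have := hlip (a x + z1) (a x + z2)
          rwa [add_sub_add_left_eq_sub] at this
      _ = |z1 - z2| := by simp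
  have hFpos : ∀ z, 0 < F z := by
    intro z
    rw [hFdef]
    rw [integral_pos_iff_support_of_nonneg (fun x => (hpos _).le) (hint z)]
    have : Function.support (fun x => ψ (a x + z)) = Set.univ := by
      ext x
      simp only [Function.mem_support, Set.mem_univ, iff_true]
      exact ne_of_gt (hpos _)
    rw [this]
    simp
  have hF0 : Filter.Tendsto F Filter.atBot (nhds 0) := by
    have key : Filter.Tendsto (fun z => ∫ x, ψ (a x + z) ∂μ) Filter.atBot
        (nhds (∫ _x, (0:ℝ) ∂μ)) := by
      apply tendsto_integral_filter_of_dominated_convergence (fun x => ψ (a x))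
      · filter_upwards with z using (hint z).aestronglyMeasurable
      · filter_upwards [Filter.eventually_le_atBot (0:ℝ)] with z hz
        filter_upwards with x
        rw [Real.norm_eq_abs, abs_of_pos (hpos _)]
        exact hmono.monotone (by linarith)
      · simpa using hint 0
      · filter_upwards with x
        have hexp : Filter.Tendsto (fun z : ℝ => Real.exp (a x + z + 1)) Filter.atBot (nhds 0) := by
          apply Real.tendsto_exp_atBot.comp
          have : Filter.Tendsto (fun z : ℝ => z + (a x + 1)) Filter.atBot Filter.atBot :=
            Filter.tendsto_atBot_add_const_right _ _ Filter.tendsto_id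
          convert this using 2 with z
          ring
        apply tendsto_of_tendsto_of_tendsto_of_le_of_le tendsto_const_nhds hexp
        · exact fun z => (hpos _).le
        · exact fun z => hub _
    simpa using key
  have hFsurj : ∀ c : ℝ, 0 < c → ∃ z : ℝ, F z = c := by
    intro c hc
    obtain ⟨z1, hz1⟩ : ∃ z1, F z1 < c := by
      have := hF0.eventually (eventually_lt_nhds hc)
      exact this.exists
    have hint2 : Integrable (fun x => (a x + 2 * c + 2) / 2) μ := by
      have heq : (fun x => (a x + 2 * c + 2) / 2) = fun x => (1/2 : ℝ) * a x + (c + 1) := by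
        funext x; ring
      rw [heq]
      exact (hai.const_mul _).add (integrable_const _)
    have hz2 : c ≤ F (2 * c) := by
      have hptw : ∀ x, (a x + 2 * c + 2) / 2 ≤ ψ (a x + 2 * c) := by
        intro x
        have := hlb (a x + 2 * c)
        linarith
      have hmono2 := integral_mono hint2 (hint (2 * c)) hptw
      have heq2 : ∫ x, (a x + 2 * c + 2) / 2 ∂μ = c + 1 := by
        have heq : (fun x => (a x + 2 * c + 2) / 2) = fun x => (1/2 : ℝ) * a x + (c + 1) := by
          funext x; ring
        rw [heq, integral_add (hai.const_mul _) (integrable_const _), integral_const_mul, ha0,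
          integral_const]
        simp
      rw [heq2] at hmono2
      calc c ≤ c + 1 := by linarith
        _ ≤ F (2 * c) := hmono2
    have hz12 : z1 < 2 * c := hFmono.lt_iff_lt.mp (lt_of_lt_of_le hz1 hz2)
    have hIVT := intermediate_value_Icc hz12.le hFlip.continuous.continuousOn
    obtain ⟨z, _, hz⟩ := hIVT ⟨hz1.le, hz2⟩
    exact ⟨z, hz⟩
  refine ⟨hFmono, hFlip.continuous, ⟨fun z _ => hFpos z, hFmono.injective.injOn, ?_⟩, ?_⟩
  · intro c hc
    obtain ⟨z, hz⟩ := hFsurj c hc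
    exact ⟨z, Set.mem_univ z, hz⟩
  · obtain ⟨Z, hZ⟩ := hFsurj 1 one_pos
    exact ⟨Z, hZ, fun y hy => hFmono.injective (hy.trans hZ.symm)⟩
end
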